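/- Let H be the presented group defined in the context (arising from the union of the 4-point quartic degeneration and a plane, Theorem 3.6). Then H is isomorphic to the symmetric group S_5. (Consequently, in the paper's setting, the fundamental group of the Galois cover of such a surface is trivial.) -/

import Mathlib

namespace Stmt10

/-- Generators: `i ↦ g(i+1)` for `i = 0,…,4`. -/
def g (i : Fin 5) : FreeGroup (Fin 5) := FreeGroup.of i

/-- The braid relator `x y x (y x y)⁻¹`, i.e. `<x,y> = e`. -/
def braid (x y : FreeGroup (Fin 5)) : FreeGroup (Fin 5) := x * y * x * (y * x * y)⁻¹

/-- The commutator relator `x y x⁻¹ y⁻¹`, i.e. `[x,y] = e`. -/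
def comm (x y : FreeGroup (Fin 5)) : FreeGroup (Fin 5) := x * y * x⁻¹ * y⁻¹

/-- Relators of the group `H` from Theorem 3.6 (union of the 4-point quartic degeneration
and a plane). -/
def rels : Set (FreeGroup (Fin 5)) :=
  { (g 0) ^ 2, (g 1) ^ 2, (g 2) ^ 2, (g 3) ^ 2, (g 4) ^ 2,
    (g 1 * g 0 * (g 1)⁻¹) * (g 3 * g 2 * (g 3)⁻¹)⁻¹,
    braid (g 0) (g 1), braid (g 1) (g 3), braid (g 2) (g 3),
    braid (g 2) (g 4), braid (g 3) (g 4),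
    comm (g 0) (g 4), comm (g 1) (g 2), comm (g 1) (g 4),
    comm ((g 1) ^ 2 * g 0 * (g 1)⁻¹ ^ 2) (g 3),
    comm ((g 1) ^ 2 * g 0 * (g 1)⁻¹ ^ 2) ((g 2)⁻¹ ^ 2 * g 3 * (g 2) ^ 2),
    g 4 * (g 3) ^ 2 * g 4 * (g 2) ^ 2 * (g 1) ^ 2 * (g 0) ^ 2 }

/-- The presented group `H`. -/
abbrev H := PresentedGroup rels

/-- generator images in `H` -/
def a (i : Fin 5) : H := PresentedGroup.of i

lemma relOne {r : FreeGroup (Fin 5)} (hr : r ∈ rels) :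
    (PresentedGroup.mk rels r : H) = 1 :=
  (QuotientGroup.eq_one_iff r).mpr (Subgroup.subset_normalClosure hr)

lemma mk_g (i : Fin 5) : PresentedGroup.mk rels (g i) = a i := rfl

lemma sq (i : Fin 5) : a i * a i = 1 := by
  have hm : (g i) ^ 2 ∈ rels := by
    fin_cases i <;> simp [rels]
  have h := relOne hm
  rw [map_pow, mk_g, pow_two] at h
  exact h

lemma inv_a (i : Fin 5) : (a i)⁻¹ = a i :=
  inv_eq_of_mul_eq_one_right (sq i)

lemma braidH {x y : Fin 5} (h : braid (g x) (g y) ∈ rels) :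
    a x * a y * a x = a y * a x * a y := by
  have h1 := relOne h
  rw [braid] at h1
  rw [map_mul, map_mul, map_inv, map_mul, map_mul, map_mul, mk_g, mk_g] at h1
  exact mul_inv_eq_one.mp h1

lemma commH {x y : Fin 5} (h : comm (g x) (g y) ∈ rels) :
    a x * a y = a y * a x := by
  have h1 := relOne h
  rw [comm] at h1
  rw [map_mul, map_mul, map_mul, map_inv, map_inv, mk_g, mk_g] at h1
  have h2 : a x * a y * (a x)⁻¹ = a y := mul_inv_eq_one.mp h1
  calc a x * a y = a x * a y * (a x)⁻¹ * a x := by group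
    _ = a y * a x := by rw [h2]

lemma b01 : a 0 * a 1 * a 0 = a 1 * a 0 * a 1 := braidH (by simp [rels])
lemma b13 : a 1 * a 3 * a 1 = a 3 * a 1 * a 3 := braidH (by simp [rels])
lemma b34 : a 3 * a 4 * a 3 = a 4 * a 3 * a 4 := braidH (by simp [rels])
lemma c04 : a 0 * a 4 = a 4 * a 0 := commH (by simp [rels])
lemma c12 : a 1 * a 2 = a 2 * a 1 := commH (by simp [rels])
lemma c14 : a 1 * a 4 = a 4 * a 1 := commH (by simp [rels])

lemma c03 : a 0 * a 3 = a 3 * a 0 := by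
  have hm : comm ((g 1) ^ 2 * g 0 * (g 1)⁻¹ ^ 2) (g 3) ∈ rels := by simp [rels]
  have h1 := relOne hm
  rw [comm] at h1
  simp only [map_mul, map_inv, map_pow, mk_g] at h1
  have e1 : (a 1) ^ 2 = 1 := by rw [pow_two, sq]
  have e2 : ((a 1)⁻¹) ^ 2 = 1 := by rw [inv_a, pow_two, sq]
  rw [e1, e2] at h1
  simp only [one_mul, mul_one] at h1
  have h2 : a 0 * a 3 * (a 0)⁻¹ = a 3 := mul_inv_eq_one.mp h1
  calc a 0 * a 3 = a 0 * a 3 * (a 0)⁻¹ * a 0 := by group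
    _ = a 3 * a 0 := by rw [h2]

lemma a2eq : a 2 = a 3 * (a 1 * a 0 * a 1) * a 3 := by
  have hm : (g 1 * g 0 * (g 1)⁻¹) * (g 3 * g 2 * (g 3)⁻¹)⁻¹ ∈ rels := by simp [rels]
  have h1 := relOne hm
  simp only [map_mul, map_inv, mk_g] at h1
  have h2 : a 1 * a 0 * (a 1)⁻¹ = a 3 * a 2 * (a 3)⁻¹ := mul_inv_eq_one.mp h1
  rw [inv_a, inv_a] at h2
  calc a 2 = (a 3 * a 3) * a 2 * (a 3 * a 3) := by rw [sq]; group
    _ = a 3 * (a 3 * a 2 * a 3) * a 3 := by group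
    _ = a 3 * (a 1 * a 0 * a 1) * a 3 := by rw [← h2]

/-! ### Coxeter generators and coset representatives -/

def s : Fin 4 → H
  | 0 => a 0
  | 1 => a 1
  | 2 => a 3
  | 3 => a 4

def u2 : Fin 2 → H
  | 0 => a 0
  | 1 => 1

def u3 : Fin 3 → H
  | 0 => a 1 * a 0
  | 1 => a 1
  | 2 => 1

def u4 : Fin 4 → H
  | 0 => a 3 * a 1 * a 0
  | 1 => a 3 * a 1
  | 2 => a 3
  | 3 => 1

def u5 : Fin 5 → H
  | 0 => a 4 * a 3 * a 1 * a 0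
  | 1 => a 4 * a 3 * a 1
  | 2 => a 4 * a 3
  | 3 => a 4
  | 4 => 1

/-! word identities -/

lemma N1 : a 4 * a 3 * a 4 = a 3 * (a 4 * a 3) := by
  rw [← b34]; group

lemma N2 : a 4 * a 3 * a 1 * a 1 = a 4 * a 3 := by
  rw [mul_assoc, sq, mul_one]

lemma N2' : a 4 * a 3 * a 1 * a 3 = a 1 * (a 4 * a 3 * a 1) := by
  calc a 4 * a 3 * a 1 * a 3 = a 4 * (a 3 * a 1 * a 3) := by group
    _ = a 4 * (a 1 * a 3 * a 1) := by rw [← b13]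
    _ = a 4 * a 1 * (a 3 * a 1) := by group
    _ = a 1 * a 4 * (a 3 * a 1) := by rw [← c14]
    _ = a 1 * (a 4 * a 3 * a 1) := by group

lemma N3 : a 4 * a 3 * a 1 * a 4 = a 3 * (a 4 * a 3 * a 1) := by
  calc a 4 * a 3 * a 1 * a 4 = a 4 * a 3 * (a 4 * a 1) := by rw [mul_assoc, c14]
    _ = a 4 * a 3 * a 4 * a 1 := by group
    _ = a 3 * (a 4 * a 3) * a 1 := by rw [N1]
    _ = a 3 * (a 4 * a 3 * a 1) := by group

lemma N4 : a 4 * a 3 * a 1 * a 0 * a 1 = a 0 * (a 4 * a 3 * a 1 * a 0) := by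
  calc a 4 * a 3 * a 1 * a 0 * a 1 = a 4 * a 3 * (a 1 * a 0 * a 1) := by group
    _ = a 4 * a 3 * (a 0 * a 1 * a 0) := by rw [b01]
    _ = a 4 * (a 3 * a 0) * (a 1 * a 0) := by group
    _ = a 4 * (a 0 * a 3) * (a 1 * a 0) := by rw [← c03]
    _ = a 4 * a 0 * (a 3 * a 1 * a 0) := by group
    _ = a 0 * a 4 * (a 3 * a 1 * a 0) := by rw [← c04]
    _ = a 0 * (a 4 * a 3 * a 1 * a 0) := by group

lemma N5 : a 4 * a 3 * a 1 * a 0 * a 3 = a 1 * (a 4 * a 3 * a 1 * a 0) := by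
  calc a 4 * a 3 * a 1 * a 0 * a 3 = a 4 * a 3 * a 1 * (a 0 * a 3) := by group
    _ = a 4 * a 3 * a 1 * (a 3 * a 0) := by rw [c03]
    _ = a 4 * (a 3 * a 1 * a 3) * a 0 := by group
    _ = a 4 * (a 1 * a 3 * a 1) * a 0 := by rw [← b13]
    _ = a 4 * a 1 * (a 3 * a 1 * a 0) := by group
    _ = a 1 * a 4 * (a 3 * a 1 * a 0) := by rw [← c14]
    _ = a 1 * (a 4 * a 3 * a 1 * a 0) := by group

lemma N6 : a 4 * a 3 * a 1 * a 0 * a 4 = a 3 * (a 4 * a 3 * a 1 * a 0) := by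
  calc a 4 * a 3 * a 1 * a 0 * a 4 = a 4 * a 3 * a 1 * (a 4 * a 0) := by rw [mul_assoc, c04]
    _ = a 4 * a 3 * (a 1 * a 4) * a 0 := by group
    _ = a 4 * a 3 * (a 4 * a 1) * a 0 := by rw [c14]
    _ = a 4 * a 3 * a 4 * (a 1 * a 0) := by group
    _ = a 3 * (a 4 * a 3) * (a 1 * a 0) := by rw [N1]
    _ = a 3 * (a 4 * a 3 * a 1 * a 0) := by group

lemma C1 : a 4 * a 3 * a 0 = a 0 * (a 4 * a 3) := by
  calc a 4 * a 3 * a 0 = a 4 * (a 0 * a 3) := by rw [mul_assoc, ← c03]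
    _ = a 4 * a 0 * a 3 := by group
    _ = a 0 * a 4 * a 3 := by rw [← c04]
    _ = a 0 * (a 4 * a 3) := by group

lemma N7 : a 3 * a 1 * a 3 = a 1 * (a 3 * a 1) := by rw [← b13]; group

lemma N8 : a 3 * a 1 * a 0 * a 1 = a 0 * (a 3 * a 1 * a 0) := by
  calc a 3 * a 1 * a 0 * a 1 = a 3 * (a 1 * a 0 * a 1) := by group
    _ = a 3 * (a 0 * a 1 * a 0) := by rw [b01]
    _ = a 3 * a 0 * (a 1 * a 0) := by group
    _ = a 0 * a 3 * (a 1 * a 0) := by rw [← c03]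
    _ = a 0 * (a 3 * a 1 * a 0) := by group

lemma N9 : a 3 * a 1 * a 0 * a 3 = a 1 * (a 3 * a 1 * a 0) := by
  calc a 3 * a 1 * a 0 * a 3 = a 3 * a 1 * (a 3 * a 0) := by rw [mul_assoc, c03]
    _ = a 3 * a 1 * a 3 * a 0 := by group
    _ = a 1 * (a 3 * a 1) * a 0 := by rw [N7]
    _ = a 1 * (a 3 * a 1 * a 0) := by group

lemma N10 : a 1 * a 0 * a 1 = a 0 * (a 1 * a 0) := by rw [← b01]; group

/-! ### core coset lemmas -/

lemma core5 (j : Fin 5) (i : Fin 4) : ∃ (k : H) (j' : Fin 5),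
    u5 j * s i = k * u5 j' ∧ (k = 1 ∨ k = a 0 ∨ k = a 1 ∨ k = a 3) := by
  fin_cases j <;> fin_cases i
  · refine ⟨1, 1, ?_, Or.inl rfl⟩
    show a 4 * a 3 * a 1 * a 0 * a 0 = 1 * (a 4 * a 3 * a 1)
    rw [one_mul, mul_assoc, sq, mul_one]
  · refine ⟨a 0, 0, ?_, Or.inr (Or.inl rfl)⟩
    show a 4 * a 3 * a 1 * a 0 * a 1 = a 0 * (a 4 * a 3 * a 1 * a 0)
    exact N4
  · refine ⟨a 1, 0, ?_, Or.inr (Or.inr (Or.inl rfl))⟩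
    show a 4 * a 3 * a 1 * a 0 * a 3 = a 1 * (a 4 * a 3 * a 1 * a 0)
    exact N5
  · refine ⟨a 3, 0, ?_, Or.inr (Or.inr (Or.inr rfl))⟩
    show a 4 * a 3 * a 1 * a 0 * a 4 = a 3 * (a 4 * a 3 * a 1 * a 0)
    exact N6
  · refine ⟨1, 0, ?_, Or.inl rfl⟩
    show a 4 * a 3 * a 1 * a 0 = 1 * (a 4 * a 3 * a 1 * a 0)
    rw [one_mul]
  · refine ⟨1, 2, ?_, Or.inl rfl⟩
    show a 4 * a 3 * a 1 * a 1 = 1 * (a 4 * a 3)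
    rw [one_mul]; exact N2
  · refine ⟨a 1, 1, ?_, Or.inr (Or.inr (Or.inl rfl))⟩
    show a 4 * a 3 * a 1 * a 3 = a 1 * (a 4 * a 3 * a 1)
    exact N2'
  · refine ⟨a 3, 1, ?_, Or.inr (Or.inr (Or.inr rfl))⟩
    show a 4 * a 3 * a 1 * a 4 = a 3 * (a 4 * a 3 * a 1)
    exact N3
  · refine ⟨a 0, 2, ?_, Or.inr (Or.inl rfl)⟩
    show a 4 * a 3 * a 0 = a 0 * (a 4 * a 3)
    exact C1
  · refine ⟨1, 1, ?_, Or.inl rfl⟩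
    show a 4 * a 3 * a 1 = 1 * (a 4 * a 3 * a 1)
    rw [one_mul]
  · refine ⟨1, 3, ?_, Or.inl rfl⟩
    show a 4 * a 3 * a 3 = 1 * a 4
    rw [one_mul, mul_assoc, sq, mul_one]
  · refine ⟨a 3, 2, ?_, Or.inr (Or.inr (Or.inr rfl))⟩
    show a 4 * a 3 * a 4 = a 3 * (a 4 * a 3)
    exact N1
  · refine ⟨a 0, 3, ?_, Or.inr (Or.inl rfl)⟩
    show a 4 * a 0 = a 0 * a 4
    exact c04.symm
  · refine ⟨a 1, 3, ?_, Or.inr (Or.inr (Or.inl rfl))⟩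
    show a 4 * a 1 = a 1 * a 4
    exact c14.symm
  · refine ⟨1, 2, ?_, Or.inl rfl⟩
    show a 4 * a 3 = 1 * (a 4 * a 3)
    rw [one_mul]
  · refine ⟨1, 4, ?_, Or.inl rfl⟩
    show a 4 * a 4 = 1 * 1
    rw [one_mul, sq]
  · refine ⟨a 0, 4, ?_, Or.inr (Or.inl rfl)⟩
    show (1 : H) * a 0 = a 0 * 1
    rw [one_mul, mul_one]
  · refine ⟨a 1, 4, ?_, Or.inr (Or.inr (Or.inl rfl))⟩
    show (1 : H) * a 1 = a 1 * 1
    rw [one_mul, mul_one]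
  · refine ⟨a 3, 4, ?_, Or.inr (Or.inr (Or.inr rfl))⟩
    show (1 : H) * a 3 = a 3 * 1
    rw [one_mul, mul_one]
  · refine ⟨1, 3, ?_, Or.inl rfl⟩
    show (1 : H) * a 4 = 1 * a 4
    rfl

lemma core4 (j : Fin 4) {i : H} (hi : i = a 0 ∨ i = a 1 ∨ i = a 3) :
    ∃ (k : H) (j' : Fin 4), u4 j * i = k * u4 j' ∧ (k = 1 ∨ k = a 0 ∨ k = a 1) := by
  rcases hi with rfl | rfl | rfl <;> fin_cases j
  · refine ⟨1, 1, ?_, Or.inl rfl⟩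
    show a 3 * a 1 * a 0 * a 0 = 1 * (a 3 * a 1)
    rw [one_mul, mul_assoc, sq, mul_one]
  · refine ⟨1, 0, ?_, Or.inl rfl⟩
    show a 3 * a 1 * a 0 = 1 * (a 3 * a 1 * a 0)
    rw [one_mul]
  · refine ⟨a 0, 2, ?_, Or.inr (Or.inl rfl)⟩
    show a 3 * a 0 = a 0 * a 3
    exact c03.symm
  · refine ⟨a 0, 3, ?_, Or.inr (Or.inl rfl)⟩
    show (1 : H) * a 0 = a 0 * 1
    rw [one_mul, mul_one]
  · refine ⟨a 0, 0, ?_, Or.inr (Or.inl rfl)⟩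
    show a 3 * a 1 * a 0 * a 1 = a 0 * (a 3 * a 1 * a 0)
    exact N8
  · refine ⟨1, 2, ?_, Or.inl rfl⟩
    show a 3 * a 1 * a 1 = 1 * a 3
    rw [one_mul, mul_assoc, sq, mul_one]
  · refine ⟨1, 1, ?_, Or.inl rfl⟩
    show a 3 * a 1 = 1 * (a 3 * a 1)
    rw [one_mul]
  · refine ⟨a 1, 3, ?_, Or.inr (Or.inr rfl)⟩
    show (1 : H) * a 1 = a 1 * 1
    rw [one_mul, mul_one]
  · refine ⟨a 1, 0, ?_, Or.inr (Or.inr rfl)⟩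
    show a 3 * a 1 * a 0 * a 3 = a 1 * (a 3 * a 1 * a 0)
    exact N9
  · refine ⟨a 1, 1, ?_, Or.inr (Or.inr rfl)⟩
    show a 3 * a 1 * a 3 = a 1 * (a 3 * a 1)
    exact N7
  · refine ⟨1, 3, ?_, Or.inl rfl⟩
    show a 3 * a 3 = 1 * 1
    rw [one_mul, sq]
  · refine ⟨1, 2, ?_, Or.inl rfl⟩
    show (1 : H) * a 3 = 1 * a 3
    rfl

lemma core3 (j : Fin 3) {i : H} (hi : i = a 0 ∨ i = a 1) :
    ∃ (k : H) (j' : Fin 3), u3 j * i = k * u3 j' ∧ (k = 1 ∨ k = a 0) := by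
  rcases hi with rfl | rfl <;> fin_cases j
  · refine ⟨1, 1, ?_, Or.inl rfl⟩
    show a 1 * a 0 * a 0 = 1 * a 1
    rw [one_mul, mul_assoc, sq, mul_one]
  · refine ⟨1, 0, ?_, Or.inl rfl⟩
    show a 1 * a 0 = 1 * (a 1 * a 0)
    rw [one_mul]
  · refine ⟨a 0, 2, ?_, Or.inr rfl⟩
    show (1 : H) * a 0 = a 0 * 1
    rw [one_mul, mul_one]
  · refine ⟨a 0, 0, ?_, Or.inr rfl⟩
    show a 1 * a 0 * a 1 = a 0 * (a 1 * a 0)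
    exact N10
  · refine ⟨1, 2, ?_, Or.inl rfl⟩
    show a 1 * a 1 = 1 * 1
    rw [one_mul, sq]
  · refine ⟨1, 1, ?_, Or.inl rfl⟩
    show (1 : H) * a 1 = 1 * a 1
    rfl

lemma core2 (j : Fin 2) : ∃ j' : Fin 2, u2 j * a 0 = u2 j' := by
  fin_cases j
  · exact ⟨1, sq 0⟩
  · exact ⟨0, one_mul _⟩

/-! ### step lemmas -/

lemma step3 (j1 : Fin 2) (j2 : Fin 3) {i : H} (hi : i = a 0 ∨ i = a 1) :
    ∃ j1' j2', (u2 j1 * u3 j2) * i = u2 j1' * u3 j2' := by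
  obtain ⟨k, j2', h, hk⟩ := core3 j2 hi
  have e : (u2 j1 * u3 j2) * i = (u2 j1 * k) * u3 j2' := by
    rw [mul_assoc, h, ← mul_assoc]
  rcases hk with rfl | rfl
  · exact ⟨j1, j2', by rw [e, mul_one]⟩
  · obtain ⟨j1', h1⟩ := core2 j1
    exact ⟨j1', j2', by rw [e, h1]⟩

lemma step4 (j1 : Fin 2) (j2 : Fin 3) (j3 : Fin 4) {i : H}
    (hi : i = a 0 ∨ i = a 1 ∨ i = a 3) :
    ∃ j1' j2' j3', (u2 j1 * u3 j2 * u4 j3) * i = u2 j1' * u3 j2' * u4 j3' := by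
  obtain ⟨k, j3', h, hk⟩ := core4 j3 hi
  have e : (u2 j1 * u3 j2 * u4 j3) * i = ((u2 j1 * u3 j2) * k) * u4 j3' := by
    rw [mul_assoc, h, ← mul_assoc]
  rcases hk with rfl | hk
  · exact ⟨j1, j2, j3', by rw [e, mul_one]⟩
  · obtain ⟨j1', j2', h2⟩ := step3 j1 j2 hk
    exact ⟨j1', j2', j3', by rw [e, h2]⟩

lemma step5 (j1 : Fin 2) (j2 : Fin 3) (j3 : Fin 4) (j4 : Fin 5) (i : Fin 4) :
    ∃ j1' j2' j3' j4',
      (u2 j1 * u3 j2 * u4 j3 * u5 j4) * s i = u2 j1' * u3 j2' * u4 j3' * u5 j4' := by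
  obtain ⟨k, j4', h, hk⟩ := core5 j4 i
  have e : (u2 j1 * u3 j2 * u4 j3 * u5 j4) * s i
      = ((u2 j1 * u3 j2 * u4 j3) * k) * u5 j4' := by
    rw [mul_assoc, h, ← mul_assoc]
  rcases hk with rfl | hk
  · exact ⟨j1, j2, j3, j4', by rw [e, mul_one]⟩
  · obtain ⟨j1', j2', j3', h3⟩ := step4 j1 j2 j3 hk
    exact ⟨j1', j2', j3', j4', by rw [e, h3]⟩

/-! ### coverage of `H` by the 120 normal forms -/

def inS (h : H) : Prop := ∃ j1 j2 j3 j4, h = u2 j1 * u3 j2 * u4 j3 * u5 j4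

lemma one_inS : inS 1 := ⟨1, 2, 3, 4, by
  show (1 : H) = 1 * 1 * 1 * 1
  simp⟩

lemma mulS {h : H} (hh : inS h) (i : Fin 4) : inS (h * s i) := by
  obtain ⟨j1, j2, j3, j4, rfl⟩ := hh
  obtain ⟨j1', j2', j3', j4', e⟩ := step5 j1 j2 j3 j4 i
  exact ⟨j1', j2', j3', j4', e⟩

lemma mulS0 {h : H} (hh : inS h) : inS (h * a 0) := mulS hh 0
lemma mulS1 {h : H} (hh : inS h) : inS (h * a 1) := mulS hh 1
lemma mulS3 {h : H} (hh : inS h) : inS (h * a 3) := mulS hh 2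
lemma mulS4 {h : H} (hh : inS h) : inS (h * a 4) := mulS hh 3

lemma mulGen {h : H} (hh : inS h) (i : Fin 5) : inS (h * a i) := by
  fin_cases i
  · exact mulS0 hh
  · exact mulS1 hh
  · show inS (h * a 2)
    have e : h * a 2 = h * a 3 * a 1 * a 0 * a 1 * a 3 := by
      rw [a2eq]; group
    rw [e]
    exact mulS3 (mulS1 (mulS0 (mulS1 (mulS3 hh))))
  · exact mulS3 hh
  · exact mulS4 hh

lemma all_inS (h : H) : inS h := by
  refine PresentedGroup.induction_on h ?_
  intro z
  suffices hs : ∀ x : H, inS x → inS (x * PresentedGroup.mk rels z) by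
    have h1 := hs 1 one_inS
    rwa [one_mul] at h1
  induction z using FreeGroup.induction_on with
  | C1 =>
    intro x hx
    rw [map_one, mul_one]
    exact hx
  | of i =>
    intro x hx
    exact mulGen hx i
  | inv_of i _ =>
    intro x hx
    have e : PresentedGroup.mk rels (FreeGroup.of i)⁻¹ = a i := by
      rw [map_inv]
      exact inv_a i
    rw [e]
    exact mulGen hx i
  | mul y z hy hz =>
    intro x hx
    rw [map_mul, ← mul_assoc]
    exact hz _ (hy _ hx)

/-! ### the homomorphism to `S₅` -/

def f : Fin 5 → Equiv.Perm (Fin 5)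
  | 0 => Equiv.swap 0 1
  | 1 => Equiv.swap 1 2
  | 2 => Equiv.swap 0 3
  | 3 => Equiv.swap 2 3
  | 4 => Equiv.swap 3 4

lemma hrels : ∀ r ∈ rels, FreeGroup.lift f r = 1 := by
  intro r hr
  simp only [rels, Set.mem_insert_iff, Set.mem_singleton_iff] at hr
  rcases hr with rfl|rfl|rfl|rfl|rfl|rfl|rfl|rfl|rfl|rfl|rfl|rfl|rfl|rfl|rfl|rfl|rfl <;>
    simp only [g, braid, comm, map_mul, map_inv, map_pow, FreeGroup.lift_apply_of] <;> decide

def φ : H →* Equiv.Perm (Fin 5) := PresentedGroup.toGroup hrels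

@[simp] lemma phi_a (i : Fin 5) : φ (a i) = f i := PresentedGroup.toGroup.of hrels

def p2 : Fin 2 → Equiv.Perm (Fin 5)
  | 0 => f 0
  | 1 => 1

def p3 : Fin 3 → Equiv.Perm (Fin 5)
  | 0 => f 1 * f 0
  | 1 => f 1
  | 2 => 1

def p4 : Fin 4 → Equiv.Perm (Fin 5)
  | 0 => f 3 * f 1 * f 0
  | 1 => f 3 * f 1
  | 2 => f 3
  | 3 => 1

def p5 : Fin 5 → Equiv.Perm (Fin 5)
  | 0 => f 4 * f 3 * f 1 * f 0
  | 1 => f 4 * f 3 * f 1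
  | 2 => f 4 * f 3
  | 3 => f 4
  | 4 => 1

lemma phi_u2 (j : Fin 2) : φ (u2 j) = p2 j := by
  fin_cases j <;> simp [u2, p2]

lemma phi_u3 (j : Fin 3) : φ (u3 j) = p3 j := by
  fin_cases j <;> simp [u3, p3]

lemma phi_u4 (j : Fin 4) : φ (u4 j) = p4 j := by
  fin_cases j <;> simp [u4, p4]

lemma phi_u5 (j : Fin 5) : φ (u5 j) = p5 j := by
  fin_cases j <;> simp [u5, p5]

lemma phi_m (j1 : Fin 2) (j2 : Fin 3) (j3 : Fin 4) (j4 : Fin 5) :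
    φ (u2 j1 * u3 j2 * u4 j3 * u5 j4) = p2 j1 * p3 j2 * p4 j3 * p5 j4 := by
  rw [map_mul, map_mul, map_mul, phi_u2, phi_u3, phi_u4, phi_u5]

set_option maxHeartbeats 2000000 in
lemma pkey : ∀ (j1 j1' : Fin 2) (j2 j2' : Fin 3) (j3 j3' : Fin 4) (j4 j4' : Fin 5),
    p2 j1 * p3 j2 * p4 j3 * p5 j4 = p2 j1' * p3 j2' * p4 j3' * p5 j4' →
    (j1 = j1' ∧ j2 = j2' ∧ j3 = j3' ∧ j4 = j4') := by decide

lemma hswap : ∀ x y : Fin 5, Equiv.swap x y ∈ φ.range := by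
  intro x y
  fin_cases x <;> fin_cases y
  · exact ⟨1, by rw [map_one]; decide⟩
  · exact ⟨a 0, by simp only [map_mul, phi_a]; decide⟩
  · exact ⟨a 0 * a 1 * a 0, by simp only [map_mul, phi_a]; decide⟩
  · exact ⟨a 2, by simp only [map_mul, phi_a]; decide⟩
  · exact ⟨a 2 * a 4 * a 2, by simp only [map_mul, phi_a]; decide⟩
  · exact ⟨a 0, by simp only [map_mul, phi_a]; decide⟩
  · exact ⟨1, by rw [map_one]; decide⟩
  · exact ⟨a 1, by simp only [map_mul, phi_a]; decide⟩
  · exact ⟨a 1 * a 3 * a 1, by simp only [map_mul, phi_a]; decide⟩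
  · exact ⟨a 4 * a 1 * a 3 * a 1 * a 4, by simp only [map_mul, phi_a]; decide⟩
  · exact ⟨a 0 * a 1 * a 0, by simp only [map_mul, phi_a]; decide⟩
  · exact ⟨a 1, by simp only [map_mul, phi_a]; decide⟩
  · exact ⟨1, by rw [map_one]; decide⟩
  · exact ⟨a 3, by simp only [map_mul, phi_a]; decide⟩
  · exact ⟨a 3 * a 4 * a 3, by simp only [map_mul, phi_a]; decide⟩
  · exact ⟨a 2, by simp only [map_mul, phi_a]; decide⟩
  · exact ⟨a 1 * a 3 * a 1, by simp only [map_mul, phi_a]; decide⟩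
  · exact ⟨a 3, by simp only [map_mul, phi_a]; decide⟩
  · exact ⟨1, by rw [map_one]; decide⟩
  · exact ⟨a 4, by simp only [map_mul, phi_a]; decide⟩
  · exact ⟨a 2 * a 4 * a 2, by simp only [map_mul, phi_a]; decide⟩
  · exact ⟨a 4 * a 1 * a 3 * a 1 * a 4, by simp only [map_mul, phi_a]; decide⟩
  · exact ⟨a 3 * a 4 * a 3, by simp only [map_mul, phi_a]; decide⟩
  · exact ⟨a 4, by simp only [map_mul, phi_a]; decide⟩
  · exact ⟨1, by rw [map_one]; decide⟩

lemma phi_surj : Function.Surjective φ := by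
  rw [← MonoidHom.range_eq_top, eq_top_iff, ← Equiv.Perm.closure_isSwap,
    Subgroup.closure_le]
  rintro σ ⟨x, y, -, rfl⟩
  exact hswap x y

lemma phi_inj : Function.Injective φ := by
  intro x y hxy
  obtain ⟨j1, j2, j3, j4, rfl⟩ := all_inS x
  obtain ⟨k1, k2, k3, k4, rfl⟩ := all_inS y
  rw [phi_m, phi_m] at hxy
  obtain ⟨e1, e2, e3, e4⟩ := pkey _ _ _ _ _ _ _ _ hxy
  rw [e1, e2, e3, e4]

/-- Theorem 3.6 (group-theoretic content): `H ≅ S₅`. -/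
theorem H_iso_S5 : Nonempty (H ≃* Equiv.Perm (Fin 5)) := by
  exact ⟨MulEquiv.ofBijective φ ⟨phi_inj, phi_surj⟩⟩

end Stmt10
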